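/- Eneström–Kakeya upper bound: if P(x) = c_n x^n + c_{n-1} x^{n-1} + ... + c_0 has all coefficients c_k real and positive, then every complex root λ of P satisfies |λ| ≤ max_{0 ≤ k ≤ n-1} (c_k / c_{k+1}). -/

import Mathlib

open Polynomial

/-- Eneström–Kakeya upper bound: if `P = cₙxⁿ + ⋯ + c₀` has all coefficients
real and positive, then every complex root `l` of `P` satisfies
`|l| ≤ max_{0 ≤ k ≤ n-1} cₖ / cₖ₊₁`. -/
theorem enestrom_kakeya_upper (n : ℕ) (hn : 1 ≤ n) (P : Polynomial ℝ)
    (hdeg : P.natDegree = n) (hpos : ∀ k, k ≤ n → 0 < P.coeff k)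
    (l : ℂ) (hroot : (P.map (algebraMap ℝ ℂ)).IsRoot l) :
    ‖l‖ ≤
      (Finset.range n).sup' (Finset.nonempty_range_iff.mpr (by omega))
        (fun k => P.coeff k / P.coeff (k + 1)) := by
  set c : ℕ → ℝ := fun k => P.coeff k with hc
  set B : ℝ := (Finset.range n).sup' (Finset.nonempty_range_iff.mpr (by omega))
        (fun k => P.coeff k / P.coeff (k + 1)) with hBdef
  set r : ℝ := ‖l‖ with hr
  by_contra hcon
  push_neg at hcon
  have hB0 : 0 < B := by
    have h := Finset.le_sup' (fun k => P.coeff k / P.coeff (k + 1))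
      (Finset.mem_range.mpr (show 0 < n from hn))
    exact lt_of_lt_of_le (div_pos (hpos 0 (by omega)) (hpos 1 hn)) h
  have hrB : B < r := hcon
  have hr0 : 0 < r := lt_trans hB0 hrB
  have hBk : ∀ k, k < n → c k ≤ B * c (k + 1) := by
    intro k hk
    have h1 : c k / c (k + 1) ≤ B :=
      Finset.le_sup' (fun k => P.coeff k / P.coeff (k + 1)) (Finset.mem_range.mpr hk)
    have h2 : 0 < c (k + 1) := hpos (k + 1) (by omega)
    calc c k = (c k / c (k + 1)) * c (k + 1) := by field_simp
    _ ≤ B * c (k + 1) := by nlinarith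
  -- root equation
  have heq : ∑ k ∈ Finset.range (n + 1), ((c k : ℂ)) * l ^ k = 0 := by
    have hle : (P.map (algebraMap ℝ ℂ)).natDegree ≤ n :=
      hdeg ▸ Polynomial.natDegree_map_le
    have hd : (P.map (algebraMap ℝ ℂ)).natDegree < n + 1 := Nat.lt_succ_of_le hle
    have := hroot
    rw [IsRoot, Polynomial.eval_eq_sum_range' hd] at this
    simpa [Polynomial.coeff_map] using this
  have heqB : ∑ k ∈ Finset.range (n + 1), (B : ℂ) * (c k : ℂ) * l ^ k = 0 := by
    have h := Finset.mul_sum (Finset.range (n + 1)) (fun k => (c k : ℂ) * l ^ k) (B : ℂ)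
    rw [heq, mul_zero] at h
    exact (Finset.sum_congr rfl (fun k _ => by ring)).trans h.symm
  have heql : ∑ k ∈ Finset.range (n + 1), (c k : ℂ) * l ^ (k + 1) = 0 := by
    have : l * ∑ k ∈ Finset.range (n + 1), ((c k : ℂ)) * l ^ k = 0 := by rw [heq, mul_zero]
    rw [Finset.mul_sum] at this
    rw [← this]
    exact Finset.sum_congr rfl (fun k _ => by ring)
  -- key identity
  have key : (c n : ℂ) * l ^ (n + 1)
      = (B : ℂ) * (c 0 : ℂ) + ∑ k ∈ Finset.range n,
          ((B * c (k + 1) - c k : ℝ) : ℂ) * l ^ (k + 1) := by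
    have hsplit : ∑ k ∈ Finset.range n,
          ((B * c (k + 1) - c k : ℝ) : ℂ) * l ^ (k + 1)
        = (∑ k ∈ Finset.range n, (B : ℂ) * (c (k + 1) : ℂ) * l ^ (k + 1))
          - ∑ k ∈ Finset.range n, (c k : ℂ) * l ^ (k + 1) := by
      rw [← Finset.sum_sub_distrib]
      exact Finset.sum_congr rfl (fun k _ => by push_cast; ring)
    have h1 : ∑ k ∈ Finset.range n, (B : ℂ) * (c (k + 1) : ℂ) * l ^ (k + 1)
        = - ((B : ℂ) * (c 0 : ℂ)) := by
      have := Finset.sum_range_succ' (fun k => (B : ℂ) * (c k : ℂ) * l ^ k) n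
      rw [heqB] at this
      have h0 : (B : ℂ) * (c 0 : ℂ) * l ^ 0 = (B : ℂ) * (c 0 : ℂ) := by ring
      rw [h0] at this
      linear_combination -this
    have h2 : ∑ k ∈ Finset.range n, (c k : ℂ) * l ^ (k + 1)
        = - ((c n : ℂ) * l ^ (n + 1)) := by
      have := Finset.sum_range_succ (fun k => (c k : ℂ) * l ^ (k + 1)) n
      rw [heql] at this
      linear_combination -this
    rw [hsplit, h1, h2]; ring
  -- take absolute values
  have habs : c n * r ^ (n + 1)
      ≤ B * c 0 + ∑ k ∈ Finset.range n, (B * c (k + 1) - c k) * r ^ (k + 1) := by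
    have hL : ‖(c n : ℂ) * l ^ (n + 1)‖ = c n * r ^ (n + 1) := by
      rw [norm_mul, norm_pow, Complex.norm_real, Real.norm_eq_abs, abs_of_pos (hpos n le_rfl)]
    rw [← hL, key]
    calc ‖(B : ℂ) * (c 0 : ℂ) + ∑ k ∈ Finset.range n,
            ((B * c (k + 1) - c k : ℝ) : ℂ) * l ^ (k + 1)‖
        ≤ ‖(B : ℂ) * (c 0 : ℂ)‖
          + ‖∑ k ∈ Finset.range n,
            ((B * c (k + 1) - c k : ℝ) : ℂ) * l ^ (k + 1)‖ := norm_add_le _ _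
      _ ≤ B * c 0 + ∑ k ∈ Finset.range n, (B * c (k + 1) - c k) * r ^ (k + 1) := by
          gcongr
          · rw [norm_mul, Complex.norm_real, Complex.norm_real, Real.norm_eq_abs, Real.norm_eq_abs,
              abs_of_pos hB0, abs_of_pos (hpos 0 (by omega))]
          · refine le_trans (norm_sum_le _ _) ?_
            apply Finset.sum_le_sum
            intro k hk
            have hk' := Finset.mem_range.mp hk
            have hnn : 0 ≤ B * c (k + 1) - c k := by
              have := hBk k hk'; linarith
            rw [norm_mul, norm_pow, Complex.norm_real, Real.norm_eq_abs, abs_of_nonneg hnn]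
  -- strict bound on RHS
  have hRHS : B * c 0 + ∑ k ∈ Finset.range n, (B * c (k + 1) - c k) * r ^ (k + 1)
      < c n * r ^ (n + 1) := by
    have hsum : ∑ k ∈ Finset.range n, (B * c (k + 1) - c k) * r ^ (k + 1)
        ≤ ∑ k ∈ Finset.range n, (c (k + 1) * r ^ (k + 2) - c k * r ^ (k + 1)) := by
      apply Finset.sum_le_sum
      intro k hk
      have hk' := Finset.mem_range.mp hk
      have h2 : 0 < c (k + 1) := hpos (k + 1) (by omega)
      have hrp : 0 < r ^ (k + 1) := pow_pos hr0 _
      have : B * c (k + 1) ≤ r * c (k + 1) := by nlinarith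
      calc (B * c (k + 1) - c k) * r ^ (k + 1)
          ≤ (r * c (k + 1) - c k) * r ^ (k + 1) := by nlinarith
        _ = c (k + 1) * r ^ (k + 2) - c k * r ^ (k + 1) := by ring
    have htel : ∑ k ∈ Finset.range n, (c (k + 1) * r ^ (k + 2) - c k * r ^ (k + 1))
        = c n * r ^ (n + 1) - c 0 * r ^ 1 := by
      exact Finset.sum_range_sub (fun k => c k * r ^ (k + 1)) n
    have hfirst : B * c 0 < r * c 0 := by nlinarith [hpos 0 (by omega : (0:ℕ) ≤ n)]
    have : B * c 0 + ∑ k ∈ Finset.range n, (B * c (k + 1) - c k) * r ^ (k + 1)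
        < r * c 0 + (c n * r ^ (n + 1) - c 0 * r ^ 1) := by
      rw [← htel]; exact add_lt_add_of_lt_of_le hfirst hsum
    calc B * c 0 + ∑ k ∈ Finset.range n, (B * c (k + 1) - c k) * r ^ (k + 1)
        < r * c 0 + (c n * r ^ (n + 1) - c 0 * r ^ 1) := this
      _ = c n * r ^ (n + 1) := by ring
  linarith
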